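/- Let k have characteristic 2, M a finite-dimensional k-vector space with non-degenerate symmetric bilinear form B and adjoint involution σ on End(M). Then the natural projection GL(M) → PGL(M) restricts to a group isomorphism from the isometry group GL(M,B) onto the centralizer PGL(M,σ) of σ in PGL(M). In particular, every projective representation G → PGL(M,σ) of a finite group G lifts uniquely to a representation G → GL(M,B). -/

import Mathlib

section Aux

variable {k M : Type*} [Field k] [AddCommGroup M] [Module k M]

/-- An endomorphism commuting with all endomorphisms is scalar
(here nondegeneracy of `B` plays the role of providing enough rank-one maps). -/
lemma stmt7_aux_scalar (B : M →ₗ[k] M →ₗ[k] k)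
    (hsymm : ∀ m₁ m₂ : M, B m₁ m₂ = B m₂ m₁)
    (hnd : ∀ m : M, (∀ m' : M, B m m' = 0) → m = 0)
    (A : M →ₗ[k] M) (hA : ∀ (f : M →ₗ[k] M) (m : M), A (f m) = f (A m)) :
    ∃ c : k, ∀ m : M, A m = c • m := by
  by_cases h0 : ∀ m : M, m = 0
  · exact ⟨1, fun m => by rw [h0 m]; simp⟩
  · push_neg at h0
    obtain ⟨m₀, hm₀⟩ := h0
    have hex : ∃ n₀ : M, B n₀ m₀ ≠ 0 := by
      by_contra h
      push_neg at h
      exact hm₀ (hnd m₀ fun m' => by rw [hsymm]; exact h m')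
    obtain ⟨n₀, hn₀⟩ := hex
    refine ⟨(B n₀ m₀)⁻¹ * B n₀ (A m₀), fun m => ?_⟩
    have hf := hA ((B n₀).smulRight ((B n₀ m₀)⁻¹ • m)) m₀
    simp only [LinearMap.smulRight_apply] at hf
    rw [smul_smul, mul_inv_cancel₀ hn₀, one_smul] at hf
    rw [hf, smul_smul, mul_comm]

/-- Injectivity: two isometries of `B` that agree projectively are equal (char 2). -/
lemma stmt7_aux_inj [CharP k 2] (B : M →ₗ[k] M →ₗ[k] k)
    (hnd : ∀ m : M, (∀ m' : M, B m m' = 0) → m = 0)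
    (g₁ g₂ : M ≃ₗ[k] M)
    (h₁ : ∀ m₁ m₂ : M, B (g₁ m₁) (g₁ m₂) = B m₁ m₂)
    (h₂ : ∀ m₁ m₂ : M, B (g₂ m₁) (g₂ m₂) = B m₁ m₂)
    (hc : ∃ c : k, c ≠ 0 ∧ ∀ m : M, g₂ m = c • g₁ m) : g₁ = g₂ := by
  obtain ⟨c, hc0, hc⟩ := hc
  by_cases h0 : ∀ m : M, m = 0
  · exact LinearEquiv.ext fun m => by rw [h0 m]; simp
  push_neg at h0
  obtain ⟨m₀, hm₀⟩ := h0
  have hex : ∃ n₀ : M, B m₀ n₀ ≠ 0 := by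
    by_contra h
    push_neg at h
    exact hm₀ (hnd m₀ h)
  obtain ⟨n₀, hn₀⟩ := hex
  have key : c * c * B m₀ n₀ = B m₀ n₀ := by
    have := h₂ m₀ n₀
    rw [hc m₀, hc n₀] at this
    simp only [map_smul, LinearMap.smul_apply, smul_eq_mul] at this
    rw [h₁ m₀ n₀] at this
    linear_combination this
  have hcc : c * c = 1 := by
    have := mul_right_cancel₀ hn₀ (key.trans (one_mul (B m₀ n₀)).symm)
    exact this
  have h2 : (2 : k) = 0 := CharP.cast_eq_zero k 2
  have hsq : (c + 1) * (c + 1) = 0 := by linear_combination hcc + c * h2 + h2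
  have hc1 : c = 1 := by
    have h3 : c + 1 = 0 := by
      rcases mul_eq_zero.mp hsq with h | h <;> exact h
    linear_combination h3 - h2
  exact LinearEquiv.ext fun m => by rw [hc m, hc1, one_smul]

/-- Surjectivity: an automorphism projectively commuting with the adjoint involution
scales to an isometry. -/
lemma stmt7_aux_surj [IsAlgClosed k] [FiniteDimensional k M]
    (B : M →ₗ[k] M →ₗ[k] k)
    (hsymm : ∀ m₁ m₂ : M, B m₁ m₂ = B m₂ m₁)
    (hnd : ∀ m : M, (∀ m' : M, B m m' = 0) → m = 0)
    (σ : (M →ₗ[k] M) → (M →ₗ[k] M))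
    (hσ : ∀ (f : M →ₗ[k] M) (m₁ m₂ : M), B m₁ (f m₂) = B (σ f m₁) m₂)
    (g : M ≃ₗ[k] M)
    (hg : ∀ f : M →ₗ[k] M,
        σ ((g : M →ₗ[k] M) ∘ₗ f ∘ₗ (g.symm : M →ₗ[k] M)) =
          (g : M →ₗ[k] M) ∘ₗ σ f ∘ₗ (g.symm : M →ₗ[k] M)) :
    ∃ c : k, c ≠ 0 ∧ ∀ m₁ m₂ : M, B (c • g m₁) (c • g m₂) = B m₁ m₂ := by
  by_cases h0 : ∀ m : M, m = 0
  · exact ⟨1, one_ne_zero, fun m₁ m₂ => by rw [h0 m₁, h0 m₂]; simp⟩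
  push_neg at h0
  obtain ⟨m₀, hm₀⟩ := h0
  -- an equality test via nondegeneracy in the first slot
  have eqB : ∀ x y : M, (∀ n : M, B x n = B y n) → x = y := by
    intro x y h
    have : x - y = 0 := hnd _ fun m' => by rw [map_sub, LinearMap.sub_apply, h, sub_self]
    rwa [sub_eq_zero] at this
  -- σ is an involution
  have hσσ : ∀ f : M →ₗ[k] M, σ (σ f) = f := by
    intro f
    ext m
    apply eqB
    intro n
    rw [← hσ (σ f) m n, hsymm, ← hσ f n m, hsymm]
  -- the comparison endomorphism A with B (A m₁) m₂ = B (g m₁) (g m₂)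
  have hndB : LinearMap.BilinForm.Nondegenerate B :=
    ⟨hnd, fun y hy => hnd y fun x => by rw [hsymm]; exact hy x⟩
  set A : M →ₗ[k] M :=
    (((LinearMap.BilinForm.toDual B hndB).symm : Module.Dual k M ≃ₗ[k] M) :
        Module.Dual k M →ₗ[k] M) ∘ₗ
      (B.compl₁₂ (g : M →ₗ[k] M) (g : M →ₗ[k] M)) with hA
  have key : ∀ m₁ m₂ : M, B (A m₁) m₂ = B (g m₁) (g m₂) := by
    intro m₁ m₂
    have h4 : B (A m₁) m₂ = (LinearMap.BilinForm.toDual B hndB) (A m₁) m₂ := rfl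
    rw [h4, hA]
    have h5 : (((LinearMap.BilinForm.toDual B hndB).symm :
        Module.Dual k M →ₗ[k] M) ∘ₗ (B.compl₁₂ (g : M →ₗ[k] M) (g : M →ₗ[k] M))) m₁
        = (LinearMap.BilinForm.toDual B hndB).symm
            (B.compl₁₂ (g : M →ₗ[k] M) (g : M →ₗ[k] M) m₁) := rfl
    rw [h5, LinearEquiv.apply_symm_apply]
    rfl
  -- A commutes with every endomorphism
  have hcomm' : ∀ (f : M →ₗ[k] M) (m : M), A (σ f m) = σ f (A m) := by
    intro f m
    apply eqB
    intro n
    rw [key]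
    have h1 : B (σ f (A m)) n = B (A m) (f n) := (hσ f (A m) n).symm
    rw [h1, key]
    -- goal : B (g (σ f m)) (g n) = B (g m) (g (f n))
    have h2 : g (f n) = ((g : M →ₗ[k] M) ∘ₗ f ∘ₗ (g.symm : M →ₗ[k] M)) (g n) := by
      simp
    rw [h2, hσ, hg]
    simp
  have hcomm : ∀ (f : M →ₗ[k] M) (m : M), A (f m) = f (A m) := by
    intro f m
    have := hcomm' (σ f) m
    rwa [hσσ] at this
  obtain ⟨lam, hlam⟩ := stmt7_aux_scalar B hsymm hnd A hcomm
  -- lam ≠ 0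
  have hAm₀ : A m₀ ≠ 0 := by
    intro h
    apply hm₀
    have hB' : ∀ n, B (g m₀) (g n) = 0 := fun n => by rw [← key, h]; simp
    have : g m₀ = 0 := hnd _ fun m' => by
      have := hB' (g.symm m')
      rwa [g.apply_symm_apply] at this
    simpa using g.map_eq_zero_iff.mp this
  have hlam0 : lam ≠ 0 := by
    intro h
    apply hAm₀
    rw [hlam m₀, h, zero_smul]
  obtain ⟨c, hc⟩ := IsAlgClosed.exists_pow_nat_eq (k := k) lam⁻¹ (n := 2) two_pos
  have hc0 : c ≠ 0 := by
    intro h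
    have h6 : lam⁻¹ = 0 := by rw [← hc, h]; ring
    exact hlam0 (inv_eq_zero.mp h6)
  refine ⟨c, hc0, fun m₁ m₂ => ?_⟩
  have h3 : B (g m₁) (g m₂) = lam * B m₁ m₂ := by
    rw [← key, hlam m₁, map_smul, LinearMap.smul_apply, smul_eq_mul]
  simp only [map_smul, LinearMap.smul_apply, smul_eq_mul]
  rw [h3]
  have h7 : c * (c * (lam * B m₁ m₂)) = (c ^ 2 * lam) * B m₁ m₂ := by ring
  rw [h7, hc, inv_mul_cancel₀ hlam0, one_mul]

end Aux

/-- In characteristic 2, the projection `GL(M) → PGL(M)` restricts to an isomorphism from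
the isometry group `GL(M,B)` onto the centralizer `PGL(M,σ)` of the adjoint involution `σ`
(acting on `PGL(M) = Aut(End M)` by conjugation); in particular every projective
representation `G → PGL(M,σ)` of a finite group lifts uniquely to a representation
`G → GL(M,B)`. -/
theorem stmt7 {k M G : Type*} [Field k] [CharP k 2] [IsAlgClosed k]
    [AddCommGroup M] [Module k M] [FiniteDimensional k M] [Group G] [Finite G]
    (B : M →ₗ[k] M →ₗ[k] k)
    (hsymm : ∀ m₁ m₂ : M, B m₁ m₂ = B m₂ m₁)
    (hnd : ∀ m : M, (∀ m' : M, B m m' = 0) → m = 0)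
    (σ : (M →ₗ[k] M) → (M →ₗ[k] M))
    (hσ : ∀ (f : M →ₗ[k] M) (m₁ m₂ : M), B m₁ (f m₂) = B (σ f m₁) m₂) :
    -- injectivity: two isometries inducing the same element of PGL(M) are equal
    (∀ g₁ g₂ : M ≃ₗ[k] M,
      (∀ m₁ m₂ : M, B (g₁ m₁) (g₁ m₂) = B m₁ m₂) →
      (∀ m₁ m₂ : M, B (g₂ m₁) (g₂ m₂) = B m₁ m₂) →
      (∃ c : k, c ≠ 0 ∧ ∀ m : M, g₂ m = c • g₁ m) → g₁ = g₂) ∧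
    -- surjectivity onto the centralizer of σ in PGL(M)
    (∀ g : M ≃ₗ[k] M,
      (∀ f : M →ₗ[k] M,
        σ ((g : M →ₗ[k] M) ∘ₗ f ∘ₗ (g.symm : M →ₗ[k] M)) =
          (g : M →ₗ[k] M) ∘ₗ σ f ∘ₗ (g.symm : M →ₗ[k] M)) →
      ∃ c : k, c ≠ 0 ∧ ∀ m₁ m₂ : M, B (c • g m₁) (c • g m₂) = B m₁ m₂) ∧
    -- unique lifting of projective representations into PGL(M,σ)
    (∀ ρ : G → M ≃ₗ[k] M,
      (∀ g h : G, ∃ c : k, c ≠ 0 ∧ ∀ m : M, ρ (g * h) m = c • ρ g (ρ h m)) →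
      (∀ (g : G) (f : M →ₗ[k] M),
        σ ((ρ g : M →ₗ[k] M) ∘ₗ f ∘ₗ ((ρ g).symm : M →ₗ[k] M)) =
          (ρ g : M →ₗ[k] M) ∘ₗ σ f ∘ₗ ((ρ g).symm : M →ₗ[k] M)) →
      ∃! ρ' : G →* (M ≃ₗ[k] M),
        (∀ (g : G) (m₁ m₂ : M), B (ρ' g m₁) (ρ' g m₂) = B m₁ m₂) ∧
        (∀ g : G, ∃ c : k, c ≠ 0 ∧ ∀ m : M, ρ' g m = c • ρ g m)) := by
  refine ⟨fun g₁ g₂ h₁ h₂ hc => stmt7_aux_inj B hnd g₁ g₂ h₁ h₂ hc,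
    fun g hg => stmt7_aux_surj B hsymm hnd σ hσ g hg,
    fun ρ hmul hρσ => ?_⟩
  choose c hc0 hciso using fun g : G => stmt7_aux_surj B hsymm hnd σ hσ (ρ g) (hρσ g)
  let τ : G → M ≃ₗ[k] M := fun g =>
    (ρ g).trans (LinearEquiv.smulOfNeZero k M (c g) (hc0 g))
  have hτ : ∀ (g : G) (m : M), τ g m = c g • ρ g m := fun g m => rfl
  have hiso : ∀ (g : G) (m₁ m₂ : M), B (τ g m₁) (τ g m₂) = B m₁ m₂ := fun g m₁ m₂ => by
    rw [hτ, hτ]; exact hciso g m₁ m₂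
  have hmul' : ∀ g h : G, τ (g * h) = τ g * τ h := by
    intro g h
    obtain ⟨d, hd0, hd⟩ := hmul g h
    symm
    apply stmt7_aux_inj B hnd (τ g * τ h) (τ (g * h))
    · intro m₁ m₂
      show B (τ g (τ h m₁)) (τ g (τ h m₂)) = B m₁ m₂
      rw [hiso, hiso]
    · exact hiso (g * h)
    · refine ⟨c (g * h) * d * (c g)⁻¹ * (c h)⁻¹, ?_, ?_⟩
      · exact mul_ne_zero (mul_ne_zero (mul_ne_zero (hc0 _) hd0) (inv_ne_zero (hc0 g)))
          (inv_ne_zero (hc0 h))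
      · intro m
        show τ (g * h) m = _ • τ g (τ h m)
        rw [hτ, hτ, hτ, hd m, map_smul]
        simp only [smul_smul]
        congr 1
        have h1 := hc0 g
        have h2 := hc0 h
        field_simp
  refine ⟨MonoidHom.mk' τ hmul', ⟨fun g m₁ m₂ => hiso g m₁ m₂,
    fun g => ⟨c g, hc0 g, fun m => hτ g m⟩⟩, ?_⟩
  intro ρ₂ hρ₂
  obtain ⟨hiso₂, hsc₂⟩ := hρ₂
  apply MonoidHom.ext
  intro g
  obtain ⟨c₂, hc₂0, hc₂⟩ := hsc₂ g
  refine (stmt7_aux_inj B hnd (ρ₂ g) ((MonoidHom.mk' τ hmul') g) (hiso₂ g) (hiso g)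
    ⟨c g * c₂⁻¹, mul_ne_zero (hc0 g) (inv_ne_zero hc₂0), fun m => ?_⟩)
  show τ g m = (c g * c₂⁻¹) • ρ₂ g m
  rw [hτ, hc₂ m, smul_smul]
  congr 1
  have h1 := hc0 g
  field_simp
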